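/- With l_i = 2^{2·2^i+4}, m_i = 2^{8·2^i}, n_i = 2^{10·2^i}, the lengths of the non-ordinary bispecial factors of u interlace: for all i ≥ 0, |b_i| < |c_i| < |a_{i+1}| < |d_i| < |b_{i+1}|, where a_i = \hat{σ}_0⋯\hat{σ}_{i-1}(ε), b_i = \hat{σ}_0⋯\hat{σ}_{i-1}(1^{l_i}), c_i = \hat{σ}_0⋯\hat{σ}_{i-1}(0^{m_i - 1}), d_i = \hat{σ}_0⋯\hat{σ}_{i-1}(1^{n_i - 1}). -/

import Mathlib

/-- The `k`-th power of a finite word `w` (concatenation of `k` copies). -/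
def wpow (w : List Bool) (k : ℕ) : List Bool := (List.replicate k w).flatten

/-- The pair of words `(u_i, v_i)`:  `u_0 = 0`, `v_0 = 1`,
`u_{i+1} = u_i^{m_i} v_i^{l_i}`, `v_{i+1} = u_i^{m_i} v_i^{n_i}`. -/
def uvSeq (l m n : ℕ → ℕ) : ℕ → List Bool × List Bool
  | 0 => ([false], [true])
  | i + 1 =>
      (wpow (uvSeq l m n i).1 (m i) ++ wpow (uvSeq l m n i).2 (l i),
       wpow (uvSeq l m n i).1 (m i) ++ wpow (uvSeq l m n i).2 (n i))

/-- The substitution `σ_h` : `0 ↦ 0^{m_h} 1^{l_h}`, `1 ↦ 0^{m_h} 1^{n_h}`. -/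
def subw (l m n : ℕ → ℕ) (h : ℕ) (w : List Bool) : List Bool :=
  w.flatMap fun c => List.replicate (m h) false ++ List.replicate (if c then n h else l h) true

/-- `wordIter i h = σ_h σ_{h+1} ⋯ σ_{h+i-1}(0)`. -/
def wordIter (l m n : ℕ → ℕ) : ℕ → ℕ → List Bool
  | 0, _ => [false]
  | i + 1, h => subw l m n h (wordIter l m n i (h + 1))

/-- The infinite word `u^{(h)} = lim_i σ_h ⋯ σ_{h+i-1}(0)`. -/
def limWord (l m n : ℕ → ℕ) (h : ℕ) (k : ℕ) : Bool :=
  (wordIter l m n (k + 1) h).getD k false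

/-- `w` is a factor of the infinite word `U`. -/
def IsFactor (U : ℕ → Bool) (w : List Bool) : Prop :=
  ∃ k, w = (List.range w.length).map fun j => U (k + j)

/-- `σ_0 σ_1 ⋯ σ_{h+i-1}` starting at `h`, applied to `w`. -/
def subComp (l m n : ℕ → ℕ) : ℕ → ℕ → List Bool → List Bool
  | 0, _, w => w
  | i + 1, h, w => subw l m n h (subComp l m n i (h + 1) w)

/-- `\hat{σ}_h(w) = 1^{l_h} σ_h(w) 0^{m_h} 1^{l_h}`. -/
def hatw (l m n : ℕ → ℕ) (h : ℕ) (w : List Bool) : List Bool :=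
  List.replicate (l h) true ++ subw l m n h w ++
    List.replicate (m h) false ++ List.replicate (l h) true

/-- `hatComp i h w = \hat{σ}_h ⋯ \hat{σ}_{h+i-1}(w)`. -/
def hatComp (l m n : ℕ → ℕ) : ℕ → ℕ → List Bool → List Bool
  | 0, _, w => w
  | i + 1, h, w => hatw l m n h (hatComp l m n i (h + 1) w)

/-- The complexity function of the infinite word `U`. -/
noncomputable def complexityFn (U : ℕ → Bool) (nn : ℕ) : ℕ :=
  Set.ncard {w : List Bool | w.length = nn ∧ IsFactor U w}

lemma len_eq (w : List Bool) : w.length = w.count false + w.count true := by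
  induction w with
  | nil => simp
  | cons a t ih =>
    cases a
    · rw [List.length_cons, List.count_cons_self, List.count_cons_of_ne (by simp)]
      omega
    · rw [List.length_cons, List.count_cons_self, List.count_cons_of_ne (by simp)]
      omega

lemma subw_cf (l m n : ℕ → ℕ) (h : ℕ) (w : List Bool) :
    (subw l m n h w).count false = w.length * m h := by
  induction w with
  | nil => simp [subw]
  | cons a t ih =>
    cases a <;>
      simp only [subw, List.flatMap_cons, List.count_append, List.count_replicate,
        List.length_cons] at ih ⊢ <;> simp [ih] <;> ring

lemma subw_ct (l m n : ℕ → ℕ) (h : ℕ) (w : List Bool) :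
    (subw l m n h w).count true = w.count false * l h + w.count true * n h := by
  induction w with
  | nil => simp [subw]
  | cons a t ih =>
    cases a <;>
      simp only [subw, List.flatMap_cons, List.count_append, List.count_replicate,
        List.count_cons] at ih ⊢ <;> simp [ih] <;> ring

lemma hatw_cf (l m n : ℕ → ℕ) (h : ℕ) (w : List Bool) :
    (hatw l m n h w).count false = w.length * m h + m h := by
  simp [hatw, List.count_append, List.count_replicate, subw_cf]

lemma hatw_ct (l m n : ℕ → ℕ) (h : ℕ) (w : List Bool) :
    (hatw l m n h w).count true = w.count false * l h + w.count true * n h + 2 * l h := by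
  simp [hatw, List.count_append, List.count_replicate, subw_ct]; ring

lemma hatw_len (l m n : ℕ → ℕ) (h : ℕ) (w : List Bool) :
    (hatw l m n h w).length =
      (w.length * m h + m h) + (w.count false * l h + w.count true * n h + 2 * l h) := by
  rw [len_eq, hatw_cf, hatw_ct]

lemma crt (k : ℕ) : (List.replicate k true).count true = k := by simp
lemma crtf (k : ℕ) : (List.replicate k true).count false = 0 := by
  simp [List.count_replicate]
lemma crf (k : ℕ) : (List.replicate k false).count false = k := by simp
lemma crft (k : ℕ) : (List.replicate k false).count true = 0 := by
  simp [List.count_replicate]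

lemma key (l m n : ℕ → ℕ) (hm : ∀ h, 1 ≤ m h) :
    ∀ (i h : ℕ) (w1 w2 : List Bool), w1.count false ≤ w2.count false →
      w1.count true ≤ w2.count true → w1.length < w2.length →
      (hatComp l m n i h w1).count false ≤ (hatComp l m n i h w2).count false ∧
      (hatComp l m n i h w1).count true ≤ (hatComp l m n i h w2).count true ∧
      (hatComp l m n i h w1).length < (hatComp l m n i h w2).length := by
  intro i
  induction i with
  | zero => intro h w1 w2 h1 h2 h3; exact ⟨h1, h2, h3⟩
  | succ i ih =>
    intro h w1 w2 h1 h2 h3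
    obtain ⟨z, o, L⟩ := ih (h + 1) w1 w2 h1 h2 h3
    set W1 := hatComp l m n i (h + 1) w1
    set W2 := hatComp l m n i (h + 1) w2
    have hcf : (hatw l m n h W1).count false < (hatw l m n h W2).count false := by
      rw [hatw_cf, hatw_cf]
      have : (W1.length + 1) * m h ≤ W2.length * m h :=
        Nat.mul_le_mul_right _ (by omega)
      have hmh := hm h
      nlinarith
    have hct : (hatw l m n h W1).count true ≤ (hatw l m n h W2).count true := by
      rw [hatw_ct, hatw_ct]
      gcongr
    refine ⟨?_, hct, ?_⟩
    · show (hatw l m n h W1).count false ≤ (hatw l m n h W2).count false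
      omega
    · show (hatw l m n h W1).length < (hatw l m n h W2).length
      rw [len_eq, len_eq]; omega

lemma hatComp_succ (l m n : ℕ → ℕ) :
    ∀ (i h : ℕ) (w : List Bool),
      hatComp l m n (i + 1) h w = hatComp l m n i h (hatw l m n (h + i) w) := by
  intro i
  induction i with
  | zero => intro h w; rfl
  | succ i ih =>
    intro h w
    show hatw l m n h (hatComp l m n (i + 1) (h + 1) w) = _
    rw [ih (h + 1) w]
    have : h + 1 + i = h + (i + 1) := by omega
    rw [this]
    rfl

lemma pf1 (x : ℕ) (hx : 2 ≤ x) : x^4*16 + 2 ≤ x^16 := by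
  have h1 : 1 ≤ x^4 := Nat.one_le_pow _ _ (by omega)
  have hA : x^4*32 ≤ x^16 := by
    calc x^4*32 = x^4*2^5 := by ring
      _ ≤ x^4*x^5 := Nat.mul_le_mul_left _ (Nat.pow_le_pow_left hx 5)
      _ = x^9 := by ring
      _ ≤ x^16 := Nat.pow_le_pow_right (by omega) (by norm_num)
  generalize x^4 = A at *; generalize x^16 = B at *; omega

lemma pf2 (x : ℕ) (hx : 2 ≤ x) : x^14*16 + x^2*16 ≤ x^18*16 := by
  have hA : x^2 ≤ x^14 := Nat.pow_le_pow_right (by omega) (by norm_num)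
  have hB : x^14*32 ≤ x^18*16 := by
    have h2 : (2:ℕ) ≤ x^4 := le_trans hx (Nat.le_self_pow (by norm_num) x)
    calc x^14*32 = (x^14*2)*16 := by ring
      _ ≤ (x^14*x^4)*16 := Nat.mul_le_mul_right _ (Nat.mul_le_mul_left _ h2)
      _ = x^18*16 := by ring
  generalize x^2 = A at *; generalize x^14 = B at *; generalize x^18 = C at *; omega

lemma pf3 (x : ℕ) (hx : 2 ≤ x) : x^16 + x^4*32 + 3 ≤ x^20 := by
  have h1 : 1 ≤ x^4 := Nat.one_le_pow _ _ (by omega)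
  have hB : x^4*64 ≤ x^10 := by
    calc x^4*64 = x^4*2^6 := by ring
      _ ≤ x^4*x^6 := Nat.mul_le_mul_left _ (Nat.pow_le_pow_left hx 6)
      _ = x^10 := by ring
  have hC : x^10 ≤ x^16 := Nat.pow_le_pow_right (by omega) (by norm_num)
  have hD : x^16*2 ≤ x^20 := by
    have h2 : (2:ℕ) ≤ x^4 := le_trans hx (Nat.le_self_pow (by norm_num) x)
    calc x^16*2 ≤ x^16*x^4 := Nat.mul_le_mul_left _ h2
      _ = x^20 := by ring
  generalize x^4 = A at *; generalize x^10 = B at *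
  generalize x^16 = C at *; generalize x^20 = D at *; omega

lemma pf4 (x : ℕ) (hx : 2 ≤ x) : x^18*16 + x^14*32 + x^10 ≤ x^30 := by
  have hA : x^14 ≤ x^18 := Nat.pow_le_pow_right (by omega) (by norm_num)
  have hB : x^10 ≤ x^18 := Nat.pow_le_pow_right (by omega) (by norm_num)
  have hC : x^18*64 ≤ x^30 := by
    calc x^18*64 = x^18*2^6 := by ring
      _ ≤ x^18*x^6 := Nat.mul_le_mul_left _ (Nat.pow_le_pow_left hx 6)
      _ = x^24 := by ring
      _ ≤ x^30 := Nat.pow_le_pow_right (by omega) (by norm_num)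
  generalize x^10 = A at *; generalize x^14 = B at *
  generalize x^18 = C at *; generalize x^30 = D at *; omega

theorem stmt17 (l m n : ℕ → ℕ) (hl : ∀ i, l i = 2 ^ (2 * 2 ^ i + 4))
    (hm : ∀ i, m i = 2 ^ (8 * 2 ^ i)) (hn : ∀ i, n i = 2 ^ (10 * 2 ^ i)) (i : ℕ) :
    (hatComp l m n i 0 (List.replicate (l i) true)).length <
        (hatComp l m n i 0 (List.replicate (m i - 1) false)).length ∧
      (hatComp l m n i 0 (List.replicate (m i - 1) false)).length <
        (hatComp l m n (i + 1) 0 []).length ∧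
      (hatComp l m n (i + 1) 0 []).length <
        (hatComp l m n i 0 (List.replicate (n i - 1) true)).length ∧
      (hatComp l m n i 0 (List.replicate (n i - 1) true)).length <
        (hatComp l m n (i + 1) 0 (List.replicate (l (i + 1)) true)).length := by
  have hm1 : ∀ h, 1 ≤ m h := fun h => by rw [hm]; exact Nat.one_le_two_pow
  have hl1 : ∀ h, 1 ≤ l h := fun h => by rw [hl]; exact Nat.one_le_two_pow
  have hn1 : ∀ h, 1 ≤ n h := fun h => by rw [hn]; exact Nat.one_le_two_pow
  refine ⟨?_, ?_, ?_, ?_⟩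
  · -- |b_i| < |c_i|
    rcases i with _ | j
    · show (List.replicate (l 0) true).length < (List.replicate (m 0 - 1) false).length
      rw [List.length_replicate, List.length_replicate, hl, hm]
      norm_num
    · set x : ℕ := 2 ^ (2 ^ j) with hxdef
      have hx : 2 ≤ x := by
        have h1 : 1 ≤ 2 ^ j := Nat.one_le_two_pow
        calc (2:ℕ) = 2 ^ 1 := rfl
          _ ≤ 2 ^ (2 ^ j) := Nat.pow_le_pow_right (by norm_num) h1
      have elj : l j = x ^ 2 * 16 := by
        rw [hl, show 2 * 2 ^ j + 4 = 2 ^ j * 2 + 4 from by ring, pow_add, pow_mul]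
        norm_num
        exact hxdef.symm
      have emj : m j = x ^ 8 := by
        rw [hm, show 8 * 2 ^ j = 2 ^ j * 8 from by ring, pow_mul]
      have enj : n j = x ^ 10 := by
        rw [hn, show 10 * 2 ^ j = 2 ^ j * 10 from by ring, pow_mul]
      have elj1 : l (j + 1) = x ^ 4 * 16 := by
        rw [hl, show 2 * 2 ^ (j + 1) + 4 = 2 ^ j * 4 + 4 from by ring, pow_add, pow_mul]
        norm_num
        exact hxdef.symm
      have emj1 : m (j + 1) = x ^ 16 := by
        rw [hm, show 8 * 2 ^ (j + 1) = 2 ^ j * 16 from by ring, pow_mul]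
      have enj1 : n (j + 1) = x ^ 20 := by
        rw [hn, show 10 * 2 ^ (j + 1) = 2 ^ j * 20 from by ring, pow_mul]
      obtain ⟨mi', hmi⟩ : ∃ k, m (j + 1) = k + 1 :=
        ⟨m (j + 1) - 1, by have := hm1 (j + 1); omega⟩
      have h2mi : mi' + 1 = x ^ 16 := by rw [← hmi, emj1]
      rw [hatComp_succ, hatComp_succ, Nat.zero_add, hmi, Nat.add_sub_cancel]
      have hlt : l (j + 1) + 1 ≤ mi' := by
        have h1 := pf1 x hx
        rw [elj1]; omega
      have c1 : (hatw l m n j (List.replicate (l (j + 1)) true)).count false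
          < (hatw l m n j (List.replicate mi' false)).count false := by
        rw [hatw_cf, hatw_cf, List.length_replicate, List.length_replicate]
        have h3 : (l (j + 1) + 1) * m j ≤ mi' * m j := Nat.mul_le_mul_right _ hlt
        have h4 : (l (j + 1) + 1) * m j = l (j + 1) * m j + m j := by ring
        have hmj := hm1 j
        omega
      have c2 : (hatw l m n j (List.replicate (l (j + 1)) true)).count true
          ≤ (hatw l m n j (List.replicate mi' false)).count true := by
        rw [hatw_ct, hatw_ct, crt, crtf, crf, crft]
        have hXY : l (j + 1) * n j ≤ mi' * l j := by
          rw [elj1, enj, elj]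
          have h1 := pf2 x hx
          have e2' : mi' * (x ^ 2 * 16) + x ^ 2 * 16 = x ^ 18 * 16 := by
            calc mi' * (x ^ 2 * 16) + x ^ 2 * 16 = (mi' + 1) * (x ^ 2 * 16) := by ring
              _ = x ^ 16 * (x ^ 2 * 16) := by rw [h2mi]
              _ = x ^ 18 * 16 := by ring
          have e3 : (x ^ 4 * 16) * x ^ 10 = x ^ 14 * 16 := by ring
          omega
        omega
      refine (key l m n hm1 j 0 _ _ (le_of_lt c1) c2 ?_).2.2
      rw [len_eq, len_eq]; omega
  · -- |c_i| < |a_{i+1}|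
    rw [hatComp_succ, Nat.zero_add]
    have c1 : (List.replicate (m i - 1) false).count false
        ≤ (hatw l m n i []).count false := by
      rw [crf, hatw_cf]; simp
    have c2 : (List.replicate (m i - 1) false).count true
        ≤ (hatw l m n i []).count true := by
      rw [crft]; exact Nat.zero_le _
    refine (key l m n hm1 i 0 _ _ c1 c2 ?_).2.2
    rw [List.length_replicate, hatw_len]
    simp only [List.length_nil, List.count_nil, Nat.zero_mul, Nat.zero_add]
    have := hm1 i; have := hl1 i; omega
  · -- |a_{i+1}| < |d_i|
    rcases i with _ | j
    · show (hatComp l m n 1 0 []).length < (List.replicate (n 0 - 1) true).length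
      show (hatw l m n 0 []).length < _
      rw [List.length_replicate, hatw_len]
      simp only [List.length_nil, List.count_nil, Nat.zero_mul, Nat.zero_add]
      rw [hl, hm, hn]
      norm_num
    · set x : ℕ := 2 ^ (2 ^ j) with hxdef
      have hx : 2 ≤ x := by
        have h1 : 1 ≤ 2 ^ j := Nat.one_le_two_pow
        calc (2:ℕ) = 2 ^ 1 := rfl
          _ ≤ 2 ^ (2 ^ j) := Nat.pow_le_pow_right (by norm_num) h1
      have elj : l j = x ^ 2 * 16 := by
        rw [hl, show 2 * 2 ^ j + 4 = 2 ^ j * 2 + 4 from by ring, pow_add, pow_mul]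
        norm_num
        exact hxdef.symm
      have emj : m j = x ^ 8 := by
        rw [hm, show 8 * 2 ^ j = 2 ^ j * 8 from by ring, pow_mul]
      have enj : n j = x ^ 10 := by
        rw [hn, show 10 * 2 ^ j = 2 ^ j * 10 from by ring, pow_mul]
      have elj1 : l (j + 1) = x ^ 4 * 16 := by
        rw [hl, show 2 * 2 ^ (j + 1) + 4 = 2 ^ j * 4 + 4 from by ring, pow_add, pow_mul]
        norm_num
        exact hxdef.symm
      have emj1 : m (j + 1) = x ^ 16 := by
        rw [hm, show 8 * 2 ^ (j + 1) = 2 ^ j * 16 from by ring, pow_mul]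
      have enj1 : n (j + 1) = x ^ 20 := by
        rw [hn, show 10 * 2 ^ (j + 1) = 2 ^ j * 20 from by ring, pow_mul]
      obtain ⟨ni', hni⟩ : ∃ k, n (j + 1) = k + 1 :=
        ⟨n (j + 1) - 1, by have := hn1 (j + 1); omega⟩
      have h2ni : ni' + 1 = x ^ 20 := by rw [← hni, enj1]
      simp only [hatComp_succ, Nat.zero_add]
      rw [hni, Nat.add_sub_cancel]
      set V := hatw l m n (j + 1) [] with hV
      have Vcf : V.count false = m (j + 1) := by
        rw [hV, hatw_cf]; simp
      have Vct : V.count true = 2 * l (j + 1) := by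
        rw [hV, hatw_ct]; simp
      have Vlen : V.length = m (j + 1) + 2 * l (j + 1) := by
        rw [len_eq, Vcf, Vct]
      have hlt : m (j + 1) + 2 * l (j + 1) + 1 ≤ ni' := by
        have h1 := pf3 x hx
        rw [emj1, elj1]
        have e1 : 2 * (x ^ 4 * 16) = x ^ 4 * 32 := by ring
        omega
      have c1 : (hatw l m n j V).count false
          < (hatw l m n j (List.replicate ni' true)).count false := by
        simp only [hatw_cf l m n j, Vlen, List.length_replicate]
        have h3 : (m (j + 1) + 2 * l (j + 1) + 1) * m j ≤ ni' * m j :=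
          Nat.mul_le_mul_right _ hlt
        have h4 : (m (j + 1) + 2 * l (j + 1) + 1) * m j
            = (m (j + 1) + 2 * l (j + 1)) * m j + m j := by ring
        have hmj := hm1 j
        omega
      have c2 : (hatw l m n j V).count true
          ≤ (hatw l m n j (List.replicate ni' true)).count true := by
        simp only [hatw_ct l m n j, Vcf, Vct, crt, crtf]
        have hXY : m (j + 1) * l j + (2 * l (j + 1)) * n j ≤ ni' * n j := by
          rw [emj1, elj1, elj, enj]
          have h1 := pf4 x hx
          have e2' : ni' * x ^ 10 + x ^ 10 = x ^ 30 := by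
            calc ni' * x ^ 10 + x ^ 10 = (ni' + 1) * x ^ 10 := by ring
              _ = x ^ 20 * x ^ 10 := by rw [h2ni]
              _ = x ^ 30 := by ring
          have e3 : x ^ 16 * (x ^ 2 * 16) = x ^ 18 * 16 := by ring
          have e4 : (2 * (x ^ 4 * 16)) * x ^ 10 = x ^ 14 * 32 := by ring
          omega
        omega
      refine (key l m n hm1 j 0 _ _ (le_of_lt c1) c2 ?_).2.2
      rw [len_eq, len_eq]; omega
  · -- |d_i| < |b_{i+1}|
    rw [hatComp_succ, Nat.zero_add]
    have c1 : (List.replicate (n i - 1) true).count false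
        ≤ (hatw l m n i (List.replicate (l (i + 1)) true)).count false := by
      rw [crtf]; exact Nat.zero_le _
    have hmul : n i ≤ l (i + 1) * n i := Nat.le_mul_of_pos_left _ (hl1 (i + 1))
    have c2 : (List.replicate (n i - 1) true).count true
        ≤ (hatw l m n i (List.replicate (l (i + 1)) true)).count true := by
      rw [crt, hatw_ct, crt, crtf]
      omega
    refine (key l m n hm1 i 0 _ _ c1 c2 ?_).2.2
    rw [List.length_replicate, hatw_len, List.length_replicate, crt, crtf]
    have := hm1 i; have := hn1 i
    omega
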